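/- In the braid group B_p on p strands (p ≥ 2), for any q with 1 ≤ q < p, the braid word identity (σ₁σ₂⋯σ_{p-1})^q = (σ₁σ₂⋯σ_{q-1})^q · (σ_q σ_{q+1}⋯σ_{p-1}) · (σ_{q-1} σ_q⋯σ_{p-2}) ⋯ (σ₁σ₂⋯σ_{p-q}) holds. -/

import Mathlib

/-- The braid relations on `p-1` Artin generators:
`σᵢσⱼ = σⱼσᵢ` when `|i-j| ≥ 2`, and `σᵢσ_{i+1}σᵢ = σ_{i+1}σᵢσ_{i+1}`. -/
def braidRels (p : ℕ) : Set (FreeGroup (Fin (p - 1))) :=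
  {x | ∃ i j : Fin (p - 1), ((i : ℕ) + 2 ≤ j ∨ (j : ℕ) + 2 ≤ i) ∧
      x = FreeGroup.of i * FreeGroup.of j * (FreeGroup.of j * FreeGroup.of i)⁻¹} ∪
  {x | ∃ i j : Fin (p - 1), (i : ℕ) + 1 = j ∧
      x = FreeGroup.of i * FreeGroup.of j * FreeGroup.of i *
        (FreeGroup.of j * FreeGroup.of i * FreeGroup.of j)⁻¹}

/-- The braid group `B_p` on `p` strands. -/
def BraidGroup (p : ℕ) := PresentedGroup (braidRels p)

instance (p : ℕ) : Group (BraidGroup p) := by unfold BraidGroup; infer_instance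

/-- The Artin generator `σ_{i+1}` of `B_p`, for `i : Fin (p-1)`. -/
def braidσ {p : ℕ} (i : Fin (p - 1)) : BraidGroup p := PresentedGroup.of i

namespace BraidAux

lemma braid_mk_rel {p : ℕ} {r : FreeGroup (Fin (p-1))} (hr : r ∈ braidRels p) :
    (PresentedGroup.mk (braidRels p) r : BraidGroup p) = 1 := by
  have : r ∈ Subgroup.normalClosure (braidRels p) := Subgroup.subset_normalClosure hr
  exact (QuotientGroup.eq_one_iff r).mpr this

lemma braid_comm {p : ℕ} (i j : Fin (p-1)) (h : (i : ℕ) + 2 ≤ j ∨ (j : ℕ) + 2 ≤ i) :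
    braidσ (p := p) i * braidσ j = braidσ j * braidσ i := by
  have := braid_mk_rel (p := p) (Or.inl ⟨i, j, h, rfl⟩)
  simp only [map_mul, map_inv] at this
  have h2 := mul_eq_one_iff_eq_inv.mp this
  simp [braidσ, PresentedGroup.of] at h2
  exact h2

lemma braid_braid {p : ℕ} (i j : Fin (p-1)) (h : (i : ℕ) + 1 = j) :
    braidσ (p := p) i * braidσ j * braidσ i = braidσ j * braidσ i * braidσ j := by
  have := braid_mk_rel (p := p) (Or.inr ⟨i, j, h, rfl⟩)
  simp only [map_mul, map_inv] at this
  have h2 := mul_eq_one_iff_eq_inv.mp this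
  simp [braidσ, PresentedGroup.of] at h2
  exact h2

/-- `sig p i` is `σ_{i+1}` when `i < p-1`, else `1`. -/
def sig (p i : ℕ) : BraidGroup p := if h : i < p - 1 then braidσ ⟨i, h⟩ else 1

lemma sig_comm {p i j : ℕ} (h : i + 2 ≤ j ∨ j + 2 ≤ i) :
    sig p i * sig p j = sig p j * sig p i := by
  unfold sig
  split_ifs with hi hj hj
  · exact braid_comm ⟨i, hi⟩ ⟨j, hj⟩ h
  all_goals simp

lemma sig_braid {p i : ℕ} (h : i + 2 ≤ p - 1) :
    sig p i * sig p (i+1) * sig p i = sig p (i+1) * sig p i * sig p (i+1) := by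
  have hi : i < p - 1 := by omega
  have hj : i + 1 < p - 1 := by omega
  unfold sig
  rw [dif_pos hi, dif_pos hj]
  exact braid_braid ⟨i, hi⟩ ⟨i+1, hj⟩ rfl

/-- `W p a b = σ_a σ_{a+1} ⋯ σ_{b-1}` (0-based indices). -/
def W (p a b : ℕ) : BraidGroup p := ((List.range' a (b - a)).map (sig p)).prod

/-- `V p a b = σ_{b-1} σ_{b-2} ⋯ σ_a` (0-based indices). -/
def V (p a b : ℕ) : BraidGroup p := ((List.range' a (b - a)).reverse.map (sig p)).prod

lemma W_empty {p a b : ℕ} (h : b ≤ a) : W p a b = 1 := by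
  unfold W; rw [Nat.sub_eq_zero_of_le h]; rfl

lemma V_empty {p a b : ℕ} (h : b ≤ a) : V p a b = 1 := by
  unfold V; rw [Nat.sub_eq_zero_of_le h]; rfl

lemma range'_concat' (s n : ℕ) : List.range' s (n+1) = List.range' s n ++ [s+n] := by
  have h := List.range'_concat (step := 1) (s := s) (n := n)
  rw [one_mul] at h
  exact h

lemma W_concat {p a b : ℕ} (h : a ≤ b) : W p a (b+1) = W p a b * sig p b := by
  unfold W
  rw [show b + 1 - a = (b - a) + 1 from by omega, range'_concat',
      List.map_append, List.prod_append, show a + (b - a) = b from by omega]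
  simp

lemma W_cons {p a b : ℕ} (h : a < b) : W p a b = sig p a * W p (a+1) b := by
  unfold W
  rw [show b - a = (b - (a+1)) + 1 from by omega, List.range'_succ]
  simp

lemma W_split {p a c b : ℕ} (hac : a ≤ c) (hcb : c ≤ b) :
    W p a b = W p a c * W p c b := by
  unfold W
  have h := List.range'_append (step := 1) (s := a) (m := c - a) (n := b - c)
  rw [one_mul] at h
  rw [show b - a = (c - a) + (b - c) from by omega, ← h,
      List.map_append, List.prod_append, show a + (c - a) = c from by omega]

lemma V_concat {p a b : ℕ} (h : a ≤ b) : V p a (b+1) = sig p b * V p a b := by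
  unfold V
  rw [show b + 1 - a = (b - a) + 1 from by omega, range'_concat',
      List.reverse_append, show a + (b - a) = b from by omega]
  simp

lemma sig_comm_list {p i : ℕ} : ∀ (l : List ℕ), (∀ j ∈ l, i + 2 ≤ j ∨ j + 2 ≤ i) →
    sig p i * (l.map (sig p)).prod = (l.map (sig p)).prod * sig p i := by
  intro l
  induction l with
  | nil => intro _; simp
  | cons a l ih =>
    intro h
    simp only [List.map_cons, List.prod_cons, ← mul_assoc]
    rw [sig_comm (h a (by simp))]
    rw [mul_assoc, mul_assoc, ih (fun j hj => h j (by simp [hj]))]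

lemma mem_range'_iff {m s n : ℕ} : m ∈ List.range' s n ↔ s ≤ m ∧ m < s + n := by
  rw [List.mem_range']
  constructor
  · rintro ⟨k, hk, rfl⟩; omega
  · rintro ⟨h1, h2⟩; exact ⟨m - s, by omega, by omega⟩

lemma sig_comm_W {p i a b : ℕ} (h : i + 2 ≤ a ∨ b + 1 ≤ i) :
    sig p i * W p a b = W p a b * sig p i := by
  apply sig_comm_list
  intro j hj
  rw [mem_range'_iff] at hj
  omega

lemma sig_comm_V {p i a b : ℕ} (h : i + 2 ≤ a ∨ b + 1 ≤ i) :
    sig p i * V p a b = V p a b * sig p i := by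
  apply sig_comm_list
  intro j hj
  rw [List.mem_reverse, mem_range'_iff] at hj
  omega

lemma W_shift {p a i b : ℕ} (hai : a ≤ i) (hib : i + 2 ≤ b) (hbp : b ≤ p - 1) :
    W p a b * sig p i = sig p (i+1) * W p a b := by
  have hsplit : W p a b = W p a i * (sig p i * (sig p (i+1) * W p (i+2) b)) := by
    rw [W_split (p := p) (a := a) (c := i) (b := b) hai (by omega),
        W_cons (show i < b from by omega), W_cons (show i + 1 < b from by omega)]
  rw [hsplit]
  have hc1 : sig p i * W p (i+2) b = W p (i+2) b * sig p i :=
    sig_comm_W (Or.inl le_rfl)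
  have hc2 : sig p (i+1) * W p a i = W p a i * sig p (i+1) :=
    sig_comm_W (Or.inr (by omega))
  have hb : sig p i * sig p (i+1) * sig p i = sig p (i+1) * sig p i * sig p (i+1) :=
    sig_braid (by omega)
  calc W p a i * (sig p i * (sig p (i+1) * W p (i+2) b)) * sig p i
      = W p a i * (sig p i * sig p (i+1) * (W p (i+2) b * sig p i)) := by
        simp [mul_assoc]
    _ = W p a i * (sig p i * sig p (i+1) * (sig p i * W p (i+2) b)) := by rw [← hc1]
    _ = W p a i * (sig p i * sig p (i+1) * sig p i) * W p (i+2) b := by simp [mul_assoc]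
    _ = W p a i * (sig p (i+1) * sig p i * sig p (i+1)) * W p (i+2) b := by rw [hb]
    _ = (W p a i * sig p (i+1)) * (sig p i * (sig p (i+1) * W p (i+2) b)) := by
        simp [mul_assoc]
    _ = (sig p (i+1) * W p a i) * (sig p i * (sig p (i+1) * W p (i+2) b)) := by rw [← hc2]
    _ = sig p (i+1) * (W p a i * (sig p i * (sig p (i+1) * W p (i+2) b))) := by
        simp [mul_assoc]

lemma V_shift {p m : ℕ} (hm : m ≤ p - 1) :
    ∀ b a, 1 ≤ a → a ≤ b → b ≤ m →
    V p a b * W p 0 m = W p 0 m * V p (a-1) (b-1) := by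
  intro b
  induction b with
  | zero => intro a h1 h2 _; omega
  | succ b ih =>
    intro a h1 h2 h3
    by_cases hab : a = b + 1
    · subst hab
      rw [V_empty le_rfl, V_empty le_rfl, one_mul, mul_one]
    · have hab2 : a ≤ b := by omega
      have hb1 : 1 ≤ b := by omega
      rw [V_concat hab2, Nat.add_sub_cancel, mul_assoc, ih a h1 hab2 (by omega),
          ← mul_assoc]
      have hshift : sig p b * W p 0 m = W p 0 m * sig p (b-1) := by
        have h := W_shift (p := p) (a := 0) (i := b-1) (b := m)
          (Nat.zero_le _) (by omega) hm
        rw [Nat.sub_add_cancel hb1] at h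
        exact h.symm
      rw [hshift, mul_assoc, ← V_concat (show a - 1 ≤ b - 1 from by omega),
          Nat.sub_add_cancel hb1]

lemma sig_W_sig {p m : ℕ} (h1 : 1 ≤ m) (h2 : m + 1 ≤ p - 1) :
    sig p m * W p 0 m * sig p m = W p 0 m * sig p m * sig p (m-1) := by
  have hW : W p 0 m = W p 0 (m-1) * sig p (m-1) := by
    have := W_concat (p := p) (a := 0) (b := m - 1) (Nat.zero_le _)
    rw [Nat.sub_add_cancel h1] at this
    exact this
  have hc : sig p m * W p 0 (m-1) = W p 0 (m-1) * sig p m :=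
    sig_comm_W (Or.inr (by omega))
  have hb : sig p (m-1) * sig p m * sig p (m-1) = sig p m * sig p (m-1) * sig p m := by
    have := sig_braid (p := p) (i := m - 1) (by omega)
    rw [Nat.sub_add_cancel h1] at this
    exact this
  calc sig p m * W p 0 m * sig p m
      = sig p m * W p 0 (m-1) * (sig p (m-1) * sig p m) := by rw [hW]; simp [mul_assoc]
    _ = W p 0 (m-1) * (sig p m * sig p (m-1) * sig p m) := by rw [hc]; simp [mul_assoc]
    _ = W p 0 (m-1) * (sig p (m-1) * sig p m * sig p (m-1)) := by rw [← hb]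
    _ = W p 0 m * sig p m * sig p (m-1) := by rw [hW]; simp [mul_assoc]

lemma lemE {p : ℕ} : ∀ q m : ℕ, q ≤ m + 1 → m + 1 ≤ p - 1 →
    (W p 0 (m+1)) ^ q = (W p 0 m) ^ q * V p (m+1-q) (m+1) := by
  intro q
  induction q with
  | zero =>
    intro m _ _
    rw [pow_zero, pow_zero, Nat.sub_zero, V_empty le_rfl, one_mul]
  | succ q ih =>
    intro m hq hm
    rcases Nat.eq_zero_or_pos q with hq0 | hq1
    · subst hq0
      simp only [zero_add, pow_one]
      rw [W_concat (Nat.zero_le m), show m + 1 - 1 = m from by omega,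
          V_concat (le_refl m), V_empty le_rfl, mul_one]
    · have hqm : q ≤ m := by omega
      have hm1 : 1 ≤ m := le_trans hq1 hqm
      have h1 : 1 ≤ m + 1 - q := by omega
      have h2 : m + 1 - q ≤ m := by omega
      rw [pow_succ, ih m (by omega) hm, mul_assoc]
      have key : V p (m+1-q) (m+1) * W p 0 (m+1) = W p 0 m * V p (m+1-q-1) (m+1) := by
        calc V p (m+1-q) (m+1) * W p 0 (m+1)
            = sig p m * (V p (m+1-q) m * W p 0 m) * sig p m := by
              rw [V_concat h2, W_concat (Nat.zero_le m)]; simp [mul_assoc]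
          _ = sig p m * (W p 0 m * V p (m+1-q-1) (m-1)) * sig p m := by
              rw [V_shift (show m ≤ p - 1 from by omega) m (m+1-q) h1 h2 le_rfl]
          _ = sig p m * W p 0 m * (V p (m+1-q-1) (m-1) * sig p m) := by simp [mul_assoc]
          _ = sig p m * W p 0 m * (sig p m * V p (m+1-q-1) (m-1)) := by
              rw [sig_comm_V (Or.inr (by omega))]
          _ = (sig p m * W p 0 m * sig p m) * V p (m+1-q-1) (m-1) := by simp [mul_assoc]
          _ = W p 0 m * sig p m * sig p (m-1) * V p (m+1-q-1) (m-1) := by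
              rw [sig_W_sig hm1 hm]
          _ = W p 0 m * (sig p m * (sig p (m-1) * V p (m+1-q-1) (m-1))) := by
              simp [mul_assoc]
          _ = W p 0 m * V p (m+1-q-1) (m+1) := by
              have e1 : V p (m+1-q-1) m = sig p (m-1) * V p (m+1-q-1) (m-1) := by
                have := V_concat (p := p) (a := m+1-q-1) (b := m-1)
                  (show m+1-q-1 ≤ m-1 from by omega)
                rw [Nat.sub_add_cancel hm1] at this
                exact this
              rw [← e1, ← V_concat (show m+1-q-1 ≤ m from by omega)]
      rw [key, ← mul_assoc, ← pow_succ, show m + 1 - q - 1 = m + 1 - (q+1) from by omega]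

/-- `S p q m = W (q-1) m · W (q-2) (m-1) ⋯ W 0 (m-q+1)`. -/
def S (p : ℕ) : ℕ → ℕ → BraidGroup p
  | 0, _ => 1
  | q+1, m => W p q m * S p q (m-1)

lemma S_zero {p m : ℕ} : S p 0 m = 1 := rfl

lemma S_succ {p q m : ℕ} : S p (q+1) m = W p q m * S p q (m-1) := rfl

lemma sig_comm_S {p i : ℕ} : ∀ q m : ℕ, m + 1 ≤ i →
    sig p i * S p q m = S p q m * sig p i := by
  intro q
  induction q with
  | zero => intro m _; simp [S_zero]
  | succ q ih =>
    intro m h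
    rw [S_succ, ← mul_assoc, sig_comm_W (Or.inr (by omega)), mul_assoc,
        ih (m-1) (by omega), mul_assoc]

lemma S_diag {p : ℕ} : ∀ q : ℕ, S p q (q-1) = 1 := by
  intro q
  induction q with
  | zero => rfl
  | succ q ih =>
    rw [show q + 1 - 1 = q from by omega, S_succ, W_empty le_rfl, one_mul, ih]

lemma S_succm {p : ℕ} : ∀ q m : ℕ, q ≤ m →
    S p (q+1) (m+1) = S p (q+1) m * V p (m-q) (m+1) := by
  intro q
  induction q with
  | zero =>
    intro m _
    rw [S_succ, S_succ, S_zero, S_zero, mul_one, mul_one, W_concat (Nat.zero_le m),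
        Nat.sub_zero, V_concat le_rfl, V_empty le_rfl, mul_one]
  | succ q ih =>
    intro m hqm
    have hm1 : 1 ≤ m := by omega
    rw [S_succ, Nat.add_sub_cancel]
    have hih := ih (m-1) (by omega)
    rw [Nat.sub_add_cancel hm1] at hih
    rw [hih, W_concat (show q + 1 ≤ m from by omega)]
    rw [show m - (q+1) = m - 1 - q from by omega,
        V_concat (show m - 1 - q ≤ m from by omega)]
    rw [S_succ (q := q+1) (m := m)]
    have hc : sig p m * S p (q+1) (m-1) = S p (q+1) (m-1) * sig p m :=
      sig_comm_S (q+1) (m-1) (by omega)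
    calc W p (q+1) m * sig p m * (S p (q+1) (m-1) * V p (m-1-q) m)
        = W p (q+1) m * ((sig p m * S p (q+1) (m-1)) * V p (m-1-q) m) := by
          simp [mul_assoc]
      _ = W p (q+1) m * ((S p (q+1) (m-1) * sig p m) * V p (m-1-q) m) := by rw [hc]
      _ = W p (q+1) m * S p (q+1) (m-1) * (sig p m * V p (m-1-q) m) := by
          simp [mul_assoc]

lemma main {p : ℕ} (q : ℕ) (hq : 1 ≤ q) :
    ∀ m, q - 1 ≤ m → m ≤ p - 1 → (W p 0 m) ^ q = (W p 0 (q-1)) ^ q * S p q m := by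
  intro m
  induction m with
  | zero =>
    intro h1 _
    have : q = 1 := by omega
    subst this
    rw [S_succ, S_zero, mul_one, W_empty le_rfl]
    simp
  | succ m ih =>
    intro h1 h2
    by_cases hbase : q - 1 = m + 1
    · rw [← hbase, S_diag, mul_one, hbase]
    · have h1' : q - 1 ≤ m := by omega
      rw [lemE q m (by omega) h2, ih h1' (by omega), mul_assoc]
      obtain ⟨q', rfl⟩ : ∃ q', q = q' + 1 := ⟨q - 1, by omega⟩
      rw [show m + 1 - (q' + 1) = m - q' from by omega,
          ← S_succm q' m (by omega)]

lemma W_congr {p a b a' b' : ℕ} (h1 : a = a') (h2 : b = b') : W p a b = W p a' b' := by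
  rw [h1, h2]

lemma S_prod {p : ℕ} : ∀ q m : ℕ,
    S p q m = ((List.range q).map (fun k => W p (q-1-k) (m-k))).prod := by
  intro q
  induction q with
  | zero => intro m; simp [S_zero]
  | succ q ih =>
    intro m
    rw [S_succ, ih (m-1), List.range_succ_eq_map, List.map_cons, List.prod_cons,
        List.map_map]
    congr 1
    congr 1
    apply List.map_congr_left
    intro k _
    simp only [Function.comp_apply]
    exact W_congr (by omega) (by omega)

lemma sig_eq_braidσ {p i : ℕ} (h : i < p - 1) : sig p i = braidσ ⟨i, h⟩ := by
  unfold sig; exact dif_pos h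

lemma finRange_prod {p n : ℕ} (f : Fin n → BraidGroup p)
    (hf : ∀ i : Fin n, f i = sig p (i : ℕ)) :
    ((List.finRange n).map f).prod = W p 0 n := by
  unfold W
  rw [Nat.sub_zero, ← List.range_eq_range', ← List.map_coe_finRange_eq_range (n := n), List.map_map]
  congr 1
  apply List.map_congr_left
  intro i _
  simp only [Function.comp_apply]
  exact hf i

lemma finRange_prod' {p n a : ℕ} (f : Fin n → BraidGroup p)
    (hf : ∀ j : Fin n, f j = sig p (a + (j : ℕ))) :
    ((List.finRange n).map f).prod = ((List.range' a n).map (sig p)).prod := by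
  rw [List.range'_eq_map_range, List.map_map, ← List.map_coe_finRange_eq_range (n := n), List.map_map]
  congr 1
  apply List.map_congr_left
  intro j _
  simp only [Function.comp_apply]
  exact hf j

end BraidAux

/-- In `B_p`, `(σ₁σ₂⋯σ_{p-1})^q
  = (σ₁⋯σ_{q-1})^q · (σ_q⋯σ_{p-1})(σ_{q-1}⋯σ_{p-2})⋯(σ₁⋯σ_{p-q})`. -/
theorem braid_word_identity (p q : ℕ) (hp : 2 ≤ p) (hq : 1 ≤ q) (hqp : q < p) :
    (((List.finRange (p - 1)).map braidσ).prod) ^ q =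
      (((List.finRange (q - 1)).map (fun i =>
          braidσ (Fin.castLE (by omega) i))).prod) ^ q *
      ((List.finRange q).map (fun (k : Fin q) =>
          ((List.finRange (p - q)).map (fun (j : Fin (p - q)) =>
              braidσ (⟨q - 1 - (k : ℕ) + (j : ℕ), by
                have hk := k.isLt; have hj := j.isLt; omega⟩ : Fin (p - 1)))).prod)).prod := by
  have hmain := BraidAux.main (p := p) q hq (p-1) (by omega) le_rfl
  rw [BraidAux.finRange_prod braidσ
    (fun i => (BraidAux.sig_eq_braidσ i.isLt).symm), hmain]
  congr 1
  · congr 1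
    exact (BraidAux.finRange_prod _
      (fun i => (BraidAux.sig_eq_braidσ (show (i : ℕ) < p - 1 from by omega)).symm)).symm
  · rw [BraidAux.S_prod, ← List.map_coe_finRange_eq_range (n := q), List.map_map]
    congr 1
    apply List.map_congr_left
    intro k _
    simp only [Function.comp_apply]
    have hk := k.isLt
    rw [show BraidAux.W p (q-1-(k:ℕ)) (p-1-(k:ℕ))
        = ((List.range' (q-1-(k:ℕ)) (p-q)).map (BraidAux.sig p)).prod from by
      unfold BraidAux.W
      rw [show p-1-(k:ℕ) - (q-1-(k:ℕ)) = p - q from by omega]]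
    exact (BraidAux.finRange_prod' _
      (fun j => (BraidAux.sig_eq_braidσ
        (show q-1-(k:ℕ)+(j:ℕ) < p - 1 from by have := j.isLt; omega)).symm)).symm
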